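/- Let p ≥ n > 1 be real and let B_{pn} := max over (z,u) ∈ [0,4] × [0,1] of b_{pn}(z,u) (continuous extension as defined). Then for all nonzero h, ℓ ∈ ℝ^d, |h+ℓ|^{2p} sin² θ_{hℓ} / (|h|^p |ℓ|^n + |h|^n |ℓ|^p)² ≤ (B_{pn}/8) (1/|h|^{2n} + 1/|ℓ|^{2n}). -/

import Mathlib

open scoped BigOperators RealInnerProductSpace
noncomputable section

/-- Kronecker delta `δ_{pn}`. -/
def kdelta (p n : ℝ) : ℝ := if p = n then 1 else 0

/-- The function `b_{pn}` on `[0,4] × [0,1]`, extended by its boundary values at `u = 0, 1`. -/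
def bpn (p n : ℝ) (z u : ℝ) : ℝ :=
  if u = 0 ∨ u = 1 then 2 * z * (4 - z) / (1 + 3 * kdelta p n)
  else 2 * z * (4 - z) * (1 - u) ^ (2 * n) * u ^ (2 * n) * (1 - z * u + z * u ^ 2) ^ p /
    (((1 - u) ^ (2 * n) + u ^ (2 * n)) *
      ((1 - u) ^ p * u ^ n + (1 - u) ^ n * u ^ p) ^ 2)

/-- `B_{pn}`, the maximum of `b_{pn}` over `[0,4] × [0,1]`. -/
def Bpn (p n : ℝ) : ℝ :=
  sSup ((fun zu : ℝ × ℝ => bpn p n zu.1 zu.2) '' (Set.Icc (0 : ℝ) 4 ×ˢ Set.Icc (0 : ℝ) 1))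

/- Auxiliary lemmas -/

lemma rpow_two_mul' {x : ℝ} (hx : 0 ≤ x) (t : ℝ) : x ^ (2 * t) = (x ^ 2) ^ t := by
  rw [Real.rpow_mul hx, Real.rpow_two]

lemma rpow_mul_two' {x : ℝ} (hx : 0 ≤ x) (t : ℝ) : x ^ (2 * t) = (x ^ t) ^ 2 := by
  rw [mul_comm, Real.rpow_mul hx, Real.rpow_two]

set_option maxHeartbeats 1000000 in
/-- Uniform bound on `bpn` over the square. -/
lemma bpn_le_bound (p n : ℝ) (hpn : n ≤ p) (hn : 1 < n) {z u : ℝ}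
    (hz0 : 0 ≤ z) (hz4 : z ≤ 4) (hu0 : 0 ≤ u) (hu1 : u ≤ 1) :
    bpn p n z u ≤ 8 * 2 ^ (2 * p) := by
  have hp0 : (0:ℝ) < p := by linarith
  have h2p : (1:ℝ) ≤ 2 ^ (2 * p) := Real.one_le_rpow (by norm_num) (by linarith)
  have hzz : (0:ℝ) ≤ 2 * z * (4 - z) := by nlinarith
  have hz8 : 2 * z * (4 - z) ≤ 8 := by nlinarith [sq_nonneg (z - 2)]
  by_cases hcase : u = 0 ∨ u = 1
  · rw [bpn, if_pos hcase]
    have hd : (1:ℝ) ≤ 1 + 3 * kdelta p n := by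
      unfold kdelta; split_ifs <;> norm_num
    calc 2 * z * (4 - z) / (1 + 3 * kdelta p n) ≤ 2 * z * (4 - z) / 1 :=
          div_le_div_of_nonneg_left hzz one_pos hd
      _ ≤ 8 * 2 ^ (2 * p) := by rw [div_one]; nlinarith
  · rw [bpn, if_neg hcase]
    push_neg at hcase
    have hu0' : 0 < u := lt_of_le_of_ne hu0 (Ne.symm hcase.1)
    have hu1' : u < 1 := lt_of_le_of_ne hu1 hcase.2
    have hv0 : 0 < 1 - u := by linarith
    set v := 1 - u with hv
    clear_value v
    have hA : 0 < u ^ n := Real.rpow_pos_of_pos hu0' n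
    have hB : 0 < v ^ n := Real.rpow_pos_of_pos hv0 n
    have hP : 0 < u ^ p := Real.rpow_pos_of_pos hu0' p
    have hPb : 0 < v ^ p := Real.rpow_pos_of_pos hv0 p
    have hu2n : u ^ (2 * n) = (u ^ n) ^ 2 := rpow_mul_two' hu0'.le n
    have hv2n : v ^ (2 * n) = (v ^ n) ^ 2 := rpow_mul_two' hv0.le n
    have h2p2 : (2:ℝ) ^ (2 * p) = (2 ^ p) ^ 2 := rpow_mul_two' (by norm_num) p
    have hq : ((1:ℝ)/2) ^ p * 2 ^ p = 1 := by
      rw [← Real.mul_rpow (by norm_num) (by norm_num)]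
      norm_num
    have hq0 : (0:ℝ) < (1/2 : ℝ) ^ p := Real.rpow_pos_of_pos (by norm_num) p
    have h2p0 : (0:ℝ) < (2:ℝ) ^ p := Real.rpow_pos_of_pos (by norm_num) p
    have hw0 : 0 ≤ 1 - z * u + z * u ^ 2 := by nlinarith [sq_nonneg (2*u - 1)]
    have hw1 : 1 - z * u + z * u ^ 2 ≤ 1 := by
      nlinarith [mul_nonneg (mul_nonneg hz0 hu0'.le) hv0.le]
    have hwp : (1 - z * u + z * u ^ 2) ^ p ≤ 1 := Real.rpow_le_one hw0 hw1 hp0.le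
    have hwp0 : 0 ≤ (1 - z * u + z * u ^ 2) ^ p := Real.rpow_nonneg hw0 p
    have hD1 : 0 < v ^ (2*n) + u ^ (2*n) := by rw [hu2n, hv2n]; positivity
    have hD2 : 0 < (v ^ p * u ^ n + v ^ n * u ^ p) ^ 2 := by positivity
    rw [div_le_iff₀ (by positivity)]
    have hnum : 2 * z * (4 - z) * v ^ (2*n) * u ^ (2*n) * (1 - z * u + z * u ^ 2) ^ p
        ≤ 8 * ((v ^ n) ^ 2 * (u ^ n) ^ 2) := by
      rw [hu2n, hv2n]
      have hfac : (0:ℝ) ≤ 2 * z * (4 - z) * (v ^ n) ^ 2 * (u ^ n) ^ 2 :=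
        mul_nonneg (mul_nonneg hzz (sq_nonneg _)) (sq_nonneg _)
      calc 2 * z * (4 - z) * (v ^ n) ^ 2 * (u ^ n) ^ 2 * (1 - z * u + z * u ^ 2) ^ p
          ≤ 2 * z * (4 - z) * (v ^ n) ^ 2 * (u ^ n) ^ 2 * 1 :=
            mul_le_mul_of_nonneg_left hwp hfac
        _ ≤ 8 * ((v ^ n) ^ 2 * (u ^ n) ^ 2) := by
            rw [mul_one]
            nlinarith [mul_nonneg (sq_nonneg (v^n)) (sq_nonneg (u^n))]
    refine hnum.trans ?_
    rw [hu2n, hv2n, h2p2]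
    have hqsq : ((1/2:ℝ)^p)^2 * (2 ^ p) ^ 2 = 1 := by rw [← mul_pow, hq, one_pow]
    rcases le_total u (1/2 : ℝ) with hc | hc
    · have hvh : (1/2 : ℝ) ≤ v := by rw [hv]; linarith
      have hPbq : (1/2 : ℝ) ^ p ≤ v ^ p := Real.rpow_le_rpow (by norm_num) hvh hp0.le
      calc (8:ℝ) * ((v ^ n) ^ 2 * (u ^ n) ^ 2)
          = 8 * (2 ^ p) ^ 2 * (((1/2:ℝ)^p)^2 * ((v ^ n) ^ 2 * (u ^ n) ^ 2)) := by
            linear_combination (-(8 * ((v^n)^2*(u^n)^2))) * hqsq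
        _ ≤ 8 * (2 ^ p) ^ 2 * ((v ^ p)^2 * ((v ^ n) ^ 2 * (u ^ n) ^ 2)) := by
            refine mul_le_mul_of_nonneg_left
              (mul_le_mul_of_nonneg_right ?_ (by positivity)) (by positivity)
            exact pow_le_pow_left₀ hq0.le hPbq 2
        _ ≤ 8 * (2 ^ p) ^ 2 * (((v ^ n) ^ 2 + (u ^ n) ^ 2) * (v ^ p * u ^ n + v ^ n * u ^ p) ^ 2) := by
            refine mul_le_mul_of_nonneg_left ?_ (by positivity)
            have e1 : (v ^ p * u ^ n) ^ 2 ≤ (v ^ p * u ^ n + v ^ n * u ^ p) ^ 2 := by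
              apply pow_le_pow_left₀ (by positivity)
              nlinarith [mul_pos hB hP]
            calc (v ^ p)^2 * ((v ^ n) ^ 2 * (u ^ n) ^ 2)
                = (v ^ n) ^ 2 * (v ^ p * u ^ n) ^ 2 := by ring
              _ ≤ ((v ^ n) ^ 2 + (u ^ n) ^ 2) * (v ^ p * u ^ n + v ^ n * u ^ p) ^ 2 :=
                  mul_le_mul (by nlinarith [sq_nonneg (u^n)]) e1 (by positivity) (by positivity)
    · have hPq : (1/2 : ℝ) ^ p ≤ u ^ p := Real.rpow_le_rpow (by norm_num) hc hp0.le
      calc (8:ℝ) * ((v ^ n) ^ 2 * (u ^ n) ^ 2)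
          = 8 * (2 ^ p) ^ 2 * (((1/2:ℝ)^p)^2 * ((v ^ n) ^ 2 * (u ^ n) ^ 2)) := by
            linear_combination (-(8 * ((v^n)^2*(u^n)^2))) * hqsq
        _ ≤ 8 * (2 ^ p) ^ 2 * ((u ^ p)^2 * ((v ^ n) ^ 2 * (u ^ n) ^ 2)) := by
            refine mul_le_mul_of_nonneg_left
              (mul_le_mul_of_nonneg_right ?_ (by positivity)) (by positivity)
            exact pow_le_pow_left₀ hq0.le hPq 2
        _ ≤ 8 * (2 ^ p) ^ 2 * (((v ^ n) ^ 2 + (u ^ n) ^ 2) * (v ^ p * u ^ n + v ^ n * u ^ p) ^ 2) := by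
            refine mul_le_mul_of_nonneg_left ?_ (by positivity)
            have e1 : (v ^ n * u ^ p) ^ 2 ≤ (v ^ p * u ^ n + v ^ n * u ^ p) ^ 2 := by
              apply pow_le_pow_left₀ (by positivity)
              nlinarith [mul_pos hPb hA]
            calc (u ^ p)^2 * ((v ^ n) ^ 2 * (u ^ n) ^ 2)
                = (u ^ n) ^ 2 * (v ^ n * u ^ p) ^ 2 := by ring
              _ ≤ ((v ^ n) ^ 2 + (u ^ n) ^ 2) * (v ^ p * u ^ n + v ^ n * u ^ p) ^ 2 :=
                  mul_le_mul (by nlinarith [sq_nonneg (v^n)]) e1 (by positivity) (by positivity)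

lemma bddAbove_bpn (p n : ℝ) (hpn : n ≤ p) (hn : 1 < n) :
    BddAbove ((fun zu : ℝ × ℝ => bpn p n zu.1 zu.2) '' (Set.Icc (0 : ℝ) 4 ×ˢ Set.Icc (0 : ℝ) 1)) := by
  refine ⟨8 * 2 ^ (2 * p), ?_⟩
  rintro x ⟨⟨z, u⟩, ⟨⟨hz0, hz4⟩, ⟨hu0, hu1⟩⟩, rfl⟩
  exact bpn_le_bound p n hpn hn hz0 hz4 hu0 hu1

set_option maxHeartbeats 1000000 in
/-- The key algebraic identity. -/
lemma key_eq (p n : ℝ) (hn : 1 < n) (a b c : ℝ)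
    (ha : 0 < a) (hb : 0 < b) (hc1 : -1 ≤ c) (hc2 : c ≤ 1) :
    (a ^ 2 + 2 * (a * b * c) + b ^ 2) ^ p * (1 - c ^ 2) /
        (a ^ p * b ^ n + a ^ n * b ^ p) ^ 2
      = bpn p n (2 * (1 - c)) (a / (a + b)) / 8 * (1 / a ^ (2 * n) + 1 / b ^ (2 * n)) := by
  have hs : (0:ℝ) < a + b := by linarith
  have hsne : (a + b : ℝ) ≠ 0 := hs.ne'
  have hu0 : 0 < a / (a + b) := div_pos ha hs
  have hu1 : a / (a + b) < 1 := by rw [div_lt_one hs]; linarith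
  have hcond : ¬(a / (a + b) = 0 ∨ a / (a + b) = 1) := by
    push_neg; exact ⟨hu0.ne', hu1.ne⟩
  have hQ : 0 ≤ a ^ 2 + 2 * (a * b * c) + b ^ 2 := by
    nlinarith [sq_nonneg (a - b), mul_pos ha hb]
  have hA : 0 < a ^ n := Real.rpow_pos_of_pos ha n
  have hB : 0 < b ^ n := Real.rpow_pos_of_pos hb n
  have hP : 0 < a ^ p := Real.rpow_pos_of_pos ha p
  have hPb : 0 < b ^ p := Real.rpow_pos_of_pos hb p
  have hS : 0 < (a+b) ^ n := Real.rpow_pos_of_pos hs n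
  have hSp : 0 < (a+b) ^ p := Real.rpow_pos_of_pos hs p
  have ha2n : a ^ (2 * n) = (a ^ n) ^ 2 := rpow_mul_two' ha.le n
  have hb2n : b ^ (2 * n) = (b ^ n) ^ 2 := rpow_mul_two' hb.le n
  have hs2n : (a+b) ^ (2 * n) = ((a+b) ^ n) ^ 2 := rpow_mul_two' hs.le n
  have h1u : (1:ℝ) - a / (a + b) = b / (a + b) := by field_simp; ring
  have hwQ : 1 - (2 * (1 - c)) * (a / (a + b)) + (2 * (1 - c)) * (a / (a + b)) ^ 2
      = (a ^ 2 + 2 * (a * b * c) + b ^ 2) / (a + b) ^ 2 := by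
    field_simp; ring
  rw [bpn, if_neg hcond, h1u, hwQ,
    Real.div_rpow hb.le hs.le (2*n), Real.div_rpow ha.le hs.le (2*n),
    Real.div_rpow hb.le hs.le p, Real.div_rpow ha.le hs.le n,
    Real.div_rpow hb.le hs.le n, Real.div_rpow ha.le hs.le p,
    Real.div_rpow hQ (by positivity) p]
  have hs2p : ((a+b) ^ 2 : ℝ) ^ p = ((a+b) ^ p) ^ 2 := by
    rw [← rpow_two_mul' hs.le p, rpow_mul_two' hs.le p]
  rw [hs2p, ha2n, hb2n, hs2n]
  have hz8 : 2 * (2 * (1 - c)) * (4 - 2 * (1 - c)) = 8 * (1 - c ^ 2) := by ring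
  rw [hz8]
  have hQp0 : 0 ≤ (a ^ 2 + 2 * (a * b * c) + b ^ 2) ^ p := Real.rpow_nonneg hQ p
  field_simp
  ring

/-- The key scalar inequality. -/
lemma key_ineq (p n : ℝ) (hpn : n ≤ p) (hn : 1 < n) (a b c : ℝ)
    (ha : 0 < a) (hb : 0 < b) (hc1 : -1 ≤ c) (hc2 : c ≤ 1) :
    (a ^ 2 + 2 * (a * b * c) + b ^ 2) ^ p * (1 - c ^ 2) /
        (a ^ p * b ^ n + a ^ n * b ^ p) ^ 2 ≤
      Bpn p n / 8 * (1 / a ^ (2 * n) + 1 / b ^ (2 * n)) := by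
  rw [key_eq p n hn a b c ha hb hc1 hc2]
  have hs : (0:ℝ) < a + b := by linarith
  have hmem : bpn p n (2 * (1 - c)) (a / (a + b)) ≤ Bpn p n := by
    apply le_csSup (bddAbove_bpn p n hpn hn)
    refine ⟨(2 * (1 - c), a / (a + b)), ⟨⟨by nlinarith, by nlinarith⟩,
      ⟨(div_pos ha hs).le, by rw [div_le_one hs]; linarith⟩⟩, rfl⟩
  have hfac : 0 ≤ 1 / a ^ (2 * n) + 1 / b ^ (2 * n) := by
    have hA : 0 < a ^ (2*n) := Real.rpow_pos_of_pos ha _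
    have hB : 0 < b ^ (2*n) := Real.rpow_pos_of_pos hb _
    positivity
  apply mul_le_mul_of_nonneg_right _ hfac
  linarith

/-- For real `p ≥ n > 1` and all nonzero `h, ℓ ∈ ℝ^d`,
`|h+ℓ|^{2p} sin² θ_{hℓ} / (|h|^p|ℓ|^n + |h|^n|ℓ|^p)² ≤ (B_{pn}/8)(|h|^{-2n} + |ℓ|^{-2n})`. -/
theorem Bpn_bound (d : ℕ) (p n : ℝ) (hpn : n ≤ p) (hn : 1 < n)
    (h ℓ : EuclideanSpace ℝ (Fin d)) (hh : h ≠ 0) (hℓ : ℓ ≠ 0) :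
    ‖h + ℓ‖ ^ (2 * p) * Real.sin (InnerProductGeometry.angle h ℓ) ^ 2 /
        (‖h‖ ^ p * ‖ℓ‖ ^ n + ‖h‖ ^ n * ‖ℓ‖ ^ p) ^ 2 ≤
      Bpn p n / 8 * (1 / ‖h‖ ^ (2 * n) + 1 / ‖ℓ‖ ^ (2 * n)) := by
  have ha : 0 < ‖h‖ := norm_pos_iff.mpr hh
  have hb : 0 < ‖ℓ‖ := norm_pos_iff.mpr hℓ
  set c := Real.cos (InnerProductGeometry.angle h ℓ) with hcdef
  have hc1 : -1 ≤ c := Real.neg_one_le_cos _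
  have hc2 : c ≤ 1 := Real.cos_le_one _
  have hinner : (inner ℝ h ℓ : ℝ) = ‖h‖ * ‖ℓ‖ * c := by
    rw [hcdef, InnerProductGeometry.cos_angle]
    field_simp
  have hsin : Real.sin (InnerProductGeometry.angle h ℓ) ^ 2 = 1 - c ^ 2 := by
    have := Real.sin_sq_add_cos_sq (InnerProductGeometry.angle h ℓ)
    rw [hcdef]; linarith
  have hnorm : ‖h + ℓ‖ ^ (2 * p) = (‖h‖ ^ 2 + 2 * (‖h‖ * ‖ℓ‖ * c) + ‖ℓ‖ ^ 2) ^ p := by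
    rw [rpow_two_mul' (norm_nonneg _) p, norm_add_sq_real, hinner]
  rw [hnorm, hsin]
  exact key_ineq p n hpn hn ‖h‖ ‖ℓ‖ c ha hb hc1 hc2
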